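/- Let (X_i, φ_i)_{i∈ℕ} be an inverse system of locally compact Hausdorff spaces in which each φ_i : X_{i+1} → X_i is a continuous proper surjection (preimages of compact sets are compact). Let X = {(x_i) ∈ ∏_i X_i : φ_i(x_{i+1}) = x_i for all i} with the subspace topology, and let π_i : X → X_i be the coordinate projections. Then: (i) for every f ∈ C₀(X_i), the function f ∘ π_i belongs to C₀(X), and F_i := {f ∘ π_i : f ∈ C₀(X_i)} satisfies F_i ⊆ F_{i+1}; (ii) the union ⋃_i F_i is a *-subalgebra of C₀(X) which separates the points of X; (iii) ⋃_i F_i is dense in C₀(X) with respect to the uniform norm. -/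

import Mathlib

/-- A `Σ`-family on a set `X`, for a subset `S = Σ` of an abelian group `G` with
`Σ + Σ ⊆ Σ` and `0 ∈ Σ`: a family of bijections `α_t : X_{-t} → X_t` (`t ∈ Σ`) between
subsets of `X`, encoded by domain sets `D : G → Set X` together with total maps
`act t : X → X` (whose values outside `D (-t)` are irrelevant), such that `X_0 = X`
and `α_0 = id_X`. -/
structure SigmaFamily (G : Type*) [AddCommGroup G] (S : Set G) (X : Type*) where
  D : G → Set X
  act : G → X → X
  mapsTo : ∀ t ∈ S, Set.MapsTo (act t) (D (-t)) (D t)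
  injOn : ∀ t ∈ S, Set.InjOn (act t) (D (-t))
  surjOn : ∀ t ∈ S, Set.SurjOn (act t) (D (-t)) (D t)
  D_zero : D 0 = Set.univ
  act_zero : ∀ x, act 0 x = x

namespace SigmaFamily

variable {G : Type*} [AddCommGroup G] {S : Set G} {X : Type*}

/-- Statement (I) (resp. (II), (III)) of the third arrow property:
`x ∈ X_{-t}` and `y = α_t x`. -/
def ArrowI (F : SigmaFamily G S X) (t : G) (x y : X) : Prop :=
  x ∈ F.D (-t) ∧ y = F.act t x

/-- The third arrow property: any two of (I), (II), (III) imply the third. -/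
def ThirdArrow (F : SigmaFamily G S X) : Prop :=
  ∀ s ∈ S, ∀ t ∈ S, ∀ x y z : X,
    (F.ArrowI t x y → F.ArrowI s y z → F.ArrowI (s + t) x z) ∧
    (F.ArrowI t x y → F.ArrowI (s + t) x z → F.ArrowI s y z) ∧
    (F.ArrowI s y z → F.ArrowI (s + t) x z → F.ArrowI t x y)

/-- Condition (1a): `α_s(X_{-s} ∩ X_t) = X_s ∩ X_{s+t}`. -/
def Cond1a (F : SigmaFamily G S X) : Prop :=
  ∀ s ∈ S, ∀ t ∈ S, F.act s '' (F.D (-s) ∩ F.D t) = F.D s ∩ F.D (s + t)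

/-- Condition (1b): `α_t(X_{-t} ∩ X_{-s-t}) = X_t ∩ X_{-s}`. -/
def Cond1b (F : SigmaFamily G S X) : Prop :=
  ∀ s ∈ S, ∀ t ∈ S, F.act t '' (F.D (-t) ∩ F.D (-(s + t))) = F.D t ∩ F.D (-s)

/-- Condition (1′): `α_s(X_{-s} ∩ X_t) ⊆ X_{s+t}`. -/
def Cond1' (F : SigmaFamily G S X) : Prop :=
  ∀ s ∈ S, ∀ t ∈ S, F.act s '' (F.D (-s) ∩ F.D t) ⊆ F.D (s + t)

/-- Condition (2): for `x ∈ X_{-t} ∩ X_{-s-t}`, `α_t x ∈ X_{-s}` and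
`α_{s+t} x = α_s (α_t x)`. -/
def Cond2 (F : SigmaFamily G S X) : Prop :=
  ∀ s ∈ S, ∀ t ∈ S, ∀ x ∈ F.D (-t) ∩ F.D (-(s + t)),
    F.act t x ∈ F.D (-s) ∧ F.act (s + t) x = F.act s (F.act t x)

end SigmaFamily

open scoped ZeroAtInfty

/-- The inverse limit of the system `(Xᵢ, φᵢ)`. -/
abbrev InvLim (X : ℕ → Type*) (φ : ∀ i, X (i + 1) → X i) : Type _ :=
  {x : ∀ i, X i // ∀ i, φ i (x (i + 1)) = x i}

/-- `Fᵢ = {f ∘ πᵢ : f ∈ C₀(Xᵢ)}`, viewed inside `C₀(X)` for the inverse limit `X`. -/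
def Fc (X : ℕ → Type*) [∀ i, TopologicalSpace (X i)] (φ : ∀ i, X (i + 1) → X i)
    (i : ℕ) : Set C₀(InvLim X φ, ℂ) :=
  {g | ∃ f : C₀(X i, ℂ), ⇑g = ⇑f ∘ (fun x : InvLim X φ => x.val i)}

set_option linter.unusedSectionVars false


open scoped ZeroAtInfty
open Filter Topology Set

section Helpers

variable {Y : Type*} [TopologicalSpace Y]

/-- A proper map tends to cocompact. -/
lemma tendsto_cocompact_of_proper' {Z : Type*} [TopologicalSpace Z] {f : Y → Z}
    (h : ∀ K : Set Z, IsCompact K → IsCompact (f ⁻¹' K)) :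
    Tendsto f (cocompact Y) (cocompact Z) := by
  rw [hasBasis_cocompact.tendsto_right_iff]
  intro K hK
  exact mem_cocompact.mpr ⟨f ⁻¹' K, h K hK, fun x hx => hx⟩

/-- Urysohn-type existence in `C₀`. -/
lemma exists_C0_one_zero [LocallyCompactSpace Y] [T2Space Y] (a : Y) {t : Set Y}
    (ht : IsClosed t) (ha : a ∉ t) :
    ∃ f : C₀(Y, ℂ), f a = 1 ∧ ∀ y ∈ t, f y = 0 := by
  obtain ⟨f, hf1, hf0, hfc, -⟩ :=
    exists_continuous_one_zero_of_isCompact (isCompact_singleton (x := a)) ht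
      (Set.disjoint_singleton_left.mpr ha)
  have hz : Tendsto (fun y => (f y : ℂ)) (cocompact Y) (𝓝 0) := by
    have h1 : Tendsto f (cocompact Y) (𝓝 (0 : ℝ)) := hfc.is_zero_at_infty
    simpa [Function.comp_def] using (Complex.continuous_ofReal.tendsto 0).comp h1
  refine ⟨⟨⟨fun y => (f y : ℂ), Complex.continuous_ofReal.comp f.continuous⟩, hz⟩, ?_, ?_⟩
  · simp [hf1 rfl]
  · intro y hy; simp [hf0 hy]

end Helpers

section Density

open OnePoint ZeroAtInftyContinuousMap

variable {Y : Type*} [TopologicalSpace Y] [LocallyCompactSpace Y] [T2Space Y]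

/-- Extension by zero to the one-point compactification. -/
noncomputable def extC0 (g : C₀(Y, ℂ)) : C(OnePoint Y, ℂ) :=
  OnePoint.continuousMapMk g.toContinuousMap 0
    (by rw [Filter.coclosedCompact_eq_cocompact]; exact zero_at_infty g)

@[simp] lemma extC0_coe (g : C₀(Y, ℂ)) (y : Y) : extC0 g y = g y := rfl

@[simp] lemma extC0_infty (g : C₀(Y, ℂ)) : extC0 g ∞ = 0 := rfl

/-- Stone–Weierstrass for `C₀` of a locally compact Hausdorff space, set form. -/
lemma dense_of_C0_star_subalgebra (A : Set C₀(Y, ℂ)) (h0 : (0 : C₀(Y, ℂ)) ∈ A)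
    (hadd : ∀ g ∈ A, ∀ h ∈ A, g + h ∈ A) (hmul : ∀ g ∈ A, ∀ h ∈ A, g * h ∈ A)
    (hstar : ∀ g ∈ A, star g ∈ A) (hsmul : ∀ c : ℂ, ∀ g ∈ A, c • g ∈ A)
    (hsep : ∀ x y : Y, x ≠ y → ∃ g ∈ A, g x ≠ g y)
    (hnv : ∀ x : Y, ∃ g ∈ A, g x ≠ 0) : Dense A := by
  classical
  -- The star subalgebra of `C(OnePoint Y, ℂ)` generated by `A` and constants.
  let B : StarSubalgebra ℂ C(OnePoint Y, ℂ) :=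
    { carrier := {u | ∃ g ∈ A, ∃ c : ℂ, u = extC0 g + c • 1}
      mul_mem' := by
        rintro u v ⟨g, hg, c, rfl⟩ ⟨h, hh, d, rfl⟩
        refine ⟨g * h + d • g + c • h, hadd _ (hadd _ (hmul g hg h hh) _
          (hsmul d g hg)) _ (hsmul c h hh), c * d, ?_⟩
        ext z
        cases z with
        | infty => simp
        | coe y => simp; ring
      add_mem' := by
        rintro u v ⟨g, hg, c, rfl⟩ ⟨h, hh, d, rfl⟩
        refine ⟨g + h, hadd g hg h hh, c + d, ?_⟩
        ext z
        cases z with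
        | infty => simp
        | coe y => simp; ring
      algebraMap_mem' := by
        intro c
        refine ⟨0, h0, c, ?_⟩
        ext z
        cases z with
        | infty => simp [Algebra.algebraMap_eq_smul_one]
        | coe y => simp [Algebra.algebraMap_eq_smul_one]
      star_mem' := by
        rintro u ⟨g, hg, c, rfl⟩
        refine ⟨star g, hstar g hg, star c, ?_⟩
        ext z
        cases z with
        | infty => simp
        | coe y => simp }
  have hBsep : B.SeparatesPoints := by
    intro x y hxy
    have main : ∀ b : Y, ∃ f ∈ (fun f : C(OnePoint Y, ℂ) => (f : OnePoint Y → ℂ)) ''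
        (B : Set C(OnePoint Y, ℂ)), f ∞ ≠ f b := by
      intro b
      obtain ⟨g, hg, hgb⟩ := hnv b
      refine ⟨extC0 g + (0 : ℂ) • 1, ⟨_, ⟨g, hg, 0, rfl⟩, rfl⟩, ?_⟩
      simpa using hgb.symm
    cases x with
    | infty =>
      cases y with
      | infty => exact absurd rfl hxy
      | coe b => exact main b
    | coe a =>
      cases y with
      | infty =>
        obtain ⟨f, hf, hne⟩ := main a
        exact ⟨f, hf, hne.symm⟩
      | coe b =>
        have hab : a ≠ b := fun h => hxy (by rw [h])
        obtain ⟨g, hg, hgab⟩ := hsep a b hab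
        refine ⟨extC0 g + (0 : ℂ) • 1, ⟨_, ⟨g, hg, 0, rfl⟩, rfl⟩, ?_⟩
        simpa using hgab
  have hB : B.topologicalClosure = ⊤ :=
    ContinuousMap.starSubalgebra_topologicalClosure_eq_top_of_separatesPoints B hBsep
  rw [Metric.dense_iff]
  intro g r hr
  have hEg : extC0 g ∈ closure (B : Set C(OnePoint Y, ℂ)) := by
    have h1 : extC0 g ∈ B.topologicalClosure := by rw [hB]; exact StarSubalgebra.mem_top
    exact h1
  obtain ⟨u, huB, hdist⟩ := Metric.mem_closure_iff.mp hEg (r / 2) (by linarith)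
  obtain ⟨a, haA, c, rfl⟩ := huB
  have hc : ‖c‖ < r / 2 := by
    have h1 : dist (extC0 g ∞) ((extC0 a + c • 1) ∞) ≤ dist (extC0 g) (extC0 a + c • 1) :=
      ContinuousMap.dist_apply_le_dist _
    simpa using h1.trans_lt hdist
  have key : dist g a ≤ dist (extC0 g) (extC0 a + c • 1) + ‖c‖ := by
    rw [← dist_toBCF_eq_dist]
    refine (BoundedContinuousFunction.dist_le (by positivity)).mpr fun y => ?_
    calc dist (g y) (a y) ≤ dist (g y) (a y + c) + dist (a y + c) (a y) := dist_triangle _ _ _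
      _ ≤ dist (extC0 g) (extC0 a + c • 1) + ‖c‖ := by
          gcongr
          · exact le_trans (by simp) (ContinuousMap.dist_apply_le_dist (y : OnePoint Y))
          · simp [dist_eq_norm]
  refine ⟨a, Metric.mem_ball.mpr ?_, haA⟩
  rw [dist_comm]
  calc dist g a ≤ dist (extC0 g) (extC0 a + c • 1) + ‖c‖ := key
    _ < r / 2 + r / 2 := by exact add_lt_add hdist hc
    _ = r := by ring
end Density


section InvLimit

open Topology

variable {X : ℕ → Type*} [∀ i, TopologicalSpace (X i)] {φ : ∀ i, X (i + 1) → X i}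

lemma continuous_proj (i : ℕ) : Continuous (fun x : InvLim X φ => x.val i) :=
  (continuous_apply i).comp continuous_subtype_val

/-- Iterated preimages of a set in `X 0`. -/
def famK (φ : ∀ i, X (i + 1) → X i) (K : Set (X 0)) : ∀ j, Set (X j)
  | 0 => K
  | (j + 1) => φ j ⁻¹' famK φ K j

variable [∀ i, T2Space (X i)]

lemma proper_proj_zero (hφc : ∀ i, Continuous (φ i))
    (hφp : ∀ i (K : Set (X i)), IsCompact K → IsCompact (φ i ⁻¹' K))
    {K : Set (X 0)} (hK : IsCompact K) :
    IsCompact ((fun x : InvLim X φ => x.val 0) ⁻¹' K) := by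
  have hfam : ∀ j, IsCompact (famK φ K j) := by
    intro j
    induction j with
    | zero => exact hK
    | succ j ih => exact hφp j _ ih
  have hCclosed : IsClosed {x : ∀ j, X j | ∀ j, φ j (x (j + 1)) = x j} := by
    have heq : {x : ∀ j, X j | ∀ j, φ j (x (j + 1)) = x j} =
        ⋂ j, {x : ∀ j, X j | φ j (x (j + 1)) = x j} := by ext x; simp [Set.mem_iInter]
    rw [heq]
    exact isClosed_iInter fun j =>
      isClosed_eq ((hφc j).comp (continuous_apply (j + 1))) (continuous_apply j)
  have hP : IsCompact (Set.pi Set.univ (famK φ K)) := isCompact_univ_pi hfam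
  have key : Subtype.val '' ((fun x : InvLim X φ => x.val 0) ⁻¹' K) =
      Set.pi Set.univ (famK φ K) ∩ {x : ∀ j, X j | ∀ j, φ j (x (j + 1)) = x j} := by
    ext x
    constructor
    · rintro ⟨y, hy, rfl⟩
      have hall : ∀ j, y.val j ∈ famK φ K j := by
        intro j
        induction j with
        | zero => exact hy
        | succ j ih =>
          simp only [famK, Set.mem_preimage]
          rw [y.2 j]
          exact ih
      exact ⟨fun j _ => hall j, y.2⟩
    · rintro ⟨hx, hc⟩
      exact ⟨⟨x, hc⟩, hx 0 (Set.mem_univ 0), rfl⟩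
  have hcpt := hP.inter_right hCclosed
  rw [← key] at hcpt
  exact IsEmbedding.subtypeVal.isCompact_iff.mpr hcpt

lemma proper_proj (hφc : ∀ i, Continuous (φ i))
    (hφp : ∀ i (K : Set (X i)), IsCompact K → IsCompact (φ i ⁻¹' K))
    (i : ℕ) {K : Set (X i)} (hK : IsCompact K) :
    IsCompact ((fun x : InvLim X φ => x.val i) ⁻¹' K) := by
  induction i with
  | zero => exact proper_proj_zero hφc hφp hK
  | succ i ih =>
    have h1 : IsCompact ((fun x : InvLim X φ => x.val i) ⁻¹' (φ i '' K)) :=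
      ih (hK.image (hφc i))
    have hsub : (fun x : InvLim X φ => x.val (i + 1)) ⁻¹' K ⊆
        (fun x : InvLim X φ => x.val i) ⁻¹' (φ i '' K) := by
      intro x hx
      exact ⟨x.val (i + 1), hx, x.2 i⟩
    have hcl : IsClosed ((fun x : InvLim X φ => x.val (i + 1)) ⁻¹' K) :=
      hK.isClosed.preimage (continuous_proj (i + 1))
    exact h1.of_isClosed_subset hcl hsub

/-- The projection as a cocompact map. -/
noncomputable def projCocompact (hφc : ∀ i, Continuous (φ i))
    (hφp : ∀ i (K : Set (X i)), IsCompact K → IsCompact (φ i ⁻¹' K)) (i : ℕ) :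
    CocompactMap (InvLim X φ) (X i) :=
  ⟨⟨fun x => x.val i, continuous_proj i⟩,
    tendsto_cocompact_of_proper' (fun K hK => proper_proj hφc hφp i hK)⟩

lemma invLim_weaklyLocallyCompact [∀ i, LocallyCompactSpace (X i)]
    (hφc : ∀ i, Continuous (φ i))
    (hφp : ∀ i (K : Set (X i)), IsCompact K → IsCompact (φ i ⁻¹' K)) :
    WeaklyLocallyCompactSpace (InvLim X φ) := by
  constructor
  intro x
  obtain ⟨K, hK, hKnhds⟩ := exists_compact_mem_nhds (x.val 0)
  exact ⟨(fun x : InvLim X φ => x.val 0) ⁻¹' K, proper_proj_zero hφc hφp hK,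
    (continuous_proj 0).continuousAt.preimage_mem_nhds hKnhds⟩

end InvLimit

/-- for an inverse system of locally compact Hausdorff spaces with
continuous proper surjective bonding maps `φᵢ`, and `X` the inverse limit:
(i) for every `f ∈ C₀(Xᵢ)` the function `f ∘ πᵢ` belongs to `C₀(X)`, and
`Fᵢ ⊆ F_{i+1}`; (ii) `⋃ᵢ Fᵢ` is a `*`-subalgebra of `C₀(X)` which separates the
points of `X`; (iii) `⋃ᵢ Fᵢ` is dense in `C₀(X)` for the uniform norm. -/
theorem invLim_C0_dense (X : ℕ → Type*) [∀ i, TopologicalSpace (X i)]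
    [∀ i, LocallyCompactSpace (X i)] [∀ i, T2Space (X i)]
    (φ : ∀ i, X (i + 1) → X i)
    (hφc : ∀ i, Continuous (φ i)) (hφs : ∀ i, Function.Surjective (φ i))
    (hφp : ∀ i (K : Set (X i)), IsCompact K → IsCompact (φ i ⁻¹' K)) :
    (∀ i (f : C₀(X i, ℂ)), ∃ g : C₀(InvLim X φ, ℂ),
      ⇑g = ⇑f ∘ (fun x : InvLim X φ => x.val i)) ∧
    (∀ i, Fc X φ i ⊆ Fc X φ (i + 1)) ∧
    ((0 : C₀(InvLim X φ, ℂ)) ∈ ⋃ i, Fc X φ i) ∧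
    (∀ g ∈ ⋃ i, Fc X φ i, ∀ h ∈ ⋃ i, Fc X φ i,
      g + h ∈ ⋃ i, Fc X φ i ∧ g * h ∈ ⋃ i, Fc X φ i) ∧
    (∀ g ∈ ⋃ i, Fc X φ i, star g ∈ ⋃ i, Fc X φ i ∧ ∀ c : ℂ, c • g ∈ ⋃ i, Fc X φ i) ∧
    (∀ x y : InvLim X φ, x ≠ y → ∃ g ∈ ⋃ i, Fc X φ i, g x ≠ g y) ∧
    Dense (⋃ i, Fc X φ i) := by
  classical
  haveI : WeaklyLocallyCompactSpace (InvLim X φ) := invLim_weaklyLocallyCompact hφc hφp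
  have hi : ∀ i (f : C₀(X i, ℂ)), ∃ g : C₀(InvLim X φ, ℂ),
      ⇑g = ⇑f ∘ (fun x : InvLim X φ => x.val i) :=
    fun i f => ⟨f.comp (projCocompact hφc hφp i), rfl⟩
  have hsub : ∀ i, Fc X φ i ⊆ Fc X φ (i + 1) := by
    rintro i g ⟨f, hf⟩
    refine ⟨f.comp ⟨⟨φ i, hφc i⟩, tendsto_cocompact_of_proper' (hφp i)⟩, ?_⟩
    rw [hf]
    funext x
    show f (x.val i) = f (φ i (x.val (i + 1)))
    rw [x.2 i]
  have hmono : Monotone (Fc X φ) := monotone_nat_of_le_succ hsub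
  have hzero : (0 : C₀(InvLim X φ, ℂ)) ∈ ⋃ i, Fc X φ i := by
    refine Set.mem_iUnion.mpr ⟨0, (0 : C₀(X 0, ℂ)), ?_⟩
    funext x
    simp
  have hops : ∀ g ∈ ⋃ i, Fc X φ i, ∀ h ∈ ⋃ i, Fc X φ i,
      g + h ∈ ⋃ i, Fc X φ i ∧ g * h ∈ ⋃ i, Fc X φ i := by
    intro g hg h hh
    rw [Set.mem_iUnion] at hg hh
    obtain ⟨i, hgi⟩ := hg
    obtain ⟨j, hhj⟩ := hh
    obtain ⟨f, hf⟩ := hmono (le_max_left i j) hgi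
    obtain ⟨f', hf'⟩ := hmono (le_max_right i j) hhj
    constructor
    · refine Set.mem_iUnion.mpr ⟨max i j, f + f', ?_⟩
      funext x
      have e1 := congrFun hf x
      have e2 := congrFun hf' x
      simp only [ZeroAtInftyContinuousMap.coe_add, Pi.add_apply, Function.comp_apply] at *
      rw [e1, e2]
    · refine Set.mem_iUnion.mpr ⟨max i j, f * f', ?_⟩
      funext x
      have e1 := congrFun hf x
      have e2 := congrFun hf' x
      simp only [ZeroAtInftyContinuousMap.coe_mul, Pi.mul_apply, Function.comp_apply] at *
      rw [e1, e2]
  have hstar : ∀ g ∈ ⋃ i, Fc X φ i, star g ∈ ⋃ i, Fc X φ i ∧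
      ∀ c : ℂ, c • g ∈ ⋃ i, Fc X φ i := by
    intro g hg
    rw [Set.mem_iUnion] at hg
    obtain ⟨i, f, hf⟩ := hg
    constructor
    · refine Set.mem_iUnion.mpr ⟨i, star f, ?_⟩
      funext x
      have e1 := congrFun hf x
      simp only [ZeroAtInftyContinuousMap.coe_star, Pi.star_apply, Function.comp_apply] at *
      rw [e1]
    · intro c
      refine Set.mem_iUnion.mpr ⟨i, c • f, ?_⟩
      funext x
      have e1 := congrFun hf x
      simp only [ZeroAtInftyContinuousMap.coe_smul, Pi.smul_apply, Function.comp_apply] at *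
      rw [e1]
  have hsep : ∀ x y : InvLim X φ, x ≠ y → ∃ g ∈ ⋃ i, Fc X φ i, g x ≠ g y := by
    intro x y hxy
    have hex : ∃ i, x.val i ≠ y.val i := by
      by_contra hcon
      push_neg at hcon
      exact hxy (Subtype.ext (funext hcon))
    obtain ⟨i, hne⟩ := hex
    obtain ⟨f, hf1, hf0⟩ := exists_C0_one_zero (x.val i)
      (isClosed_singleton (x := y.val i)) (by simpa using hne)
    obtain ⟨g, hg⟩ := hi i f
    refine ⟨g, Set.mem_iUnion.mpr ⟨i, f, hg⟩, ?_⟩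
    have ex := congrFun hg x
    have ey := congrFun hg y
    simp only [Function.comp_apply] at ex ey
    rw [ex, ey, hf1, hf0 _ rfl]
    exact one_ne_zero
  have hnv : ∀ x : InvLim X φ, ∃ g ∈ ⋃ i, Fc X φ i, g x ≠ 0 := by
    intro x
    obtain ⟨f, hf1, -⟩ := exists_C0_one_zero (x.val 0) isClosed_empty (Set.notMem_empty _)
    obtain ⟨g, hg⟩ := hi 0 f
    refine ⟨g, Set.mem_iUnion.mpr ⟨0, f, hg⟩, ?_⟩
    have ex := congrFun hg x
    simp only [Function.comp_apply] at ex
    rw [ex, hf1]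
    exact one_ne_zero
  refine ⟨hi, hsub, hzero, hops, hstar, hsep, ?_⟩
  exact dense_of_C0_star_subalgebra _ hzero
    (fun g hg h hh => (hops g hg h hh).1)
    (fun g hg h hh => (hops g hg h hh).2)
    (fun g hg => (hstar g hg).1)
    (fun c g hg => (hstar g hg).2 c)
    hsep hnv
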